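/- Let G be a finite group whose power graph P(G) is C_4-free, suppose |G| is not a prime power, and suppose the center Z(G) is an elementary abelian p-group of order greater than p (p prime). Then for every prime q ≠ p and every nontrivial q-element x ∈ G, the primes dividing |C_G(x)| are exactly p and q; moreover, if the order of x is greater than q, then every Sylow p-subgroup of C_G(x) has exponent p, the Sylow q-subgroup of C_G(x) is cyclic (say equal to ⟨y⟩) and normal in C_G(x), and the index [C_G(x) : C_{C_G(x)}(y)] is either 1 or p. -/

import Mathlib

/-- Adjacency in the power graph of a group: two distinct elements are adjacent
iff one is a power of the other. -/
def pgAdj {G : Type*} [Group G] (x y : G) : Prop :=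
  x ≠ y ∧ (x ∈ Subgroup.zpowers y ∨ y ∈ Subgroup.zpowers x)

/-- The power graph contains an induced 4-cycle. -/
def pgHasInducedC4 (G : Type*) [Group G] : Prop :=
  ∃ x u y v : G,
    x ≠ u ∧ x ≠ y ∧ x ≠ v ∧ u ≠ y ∧ u ≠ v ∧ y ≠ v ∧
    pgAdj x u ∧ pgAdj u y ∧ pgAdj y v ∧ pgAdj v x ∧
    ¬ pgAdj x y ∧ ¬ pgAdj u v

/-- The power graph is `C₄`-free. -/
def pgC4Free (G : Type*) [Group G] : Prop := ¬ pgHasInducedC4 G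

set_option maxHeartbeats 1600000
set_option linter.unusedSectionVars false
set_option linter.unusedVariables false
set_option linter.unusedTactic false

open Subgroup


section Helpers
variable {G : Type*} [Group G]

lemma pg_mem_zpowers_pow_of_coprime [Finite G] (a : G) {m : ℕ}
    (h : Nat.Coprime m (orderOf a)) : a ∈ zpowers (a ^ m) := by
  rcases le_or_gt (orderOf a) 1 with h1 | h1
  · interval_cases h2 : orderOf a
    · exact absurd h2 (orderOf_pos a).ne'
    · rw [orderOf_eq_one_iff.mp h2]; exact one_mem _
  · obtain ⟨u, -, hu⟩ := Nat.exists_mul_mod_eq_one_of_coprime h h1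
    have : (a ^ m) ^ u = a := by
      rw [← pow_mul, ← pow_mod_orderOf, hu, pow_one]
    exact mem_zpowers_iff.mpr ⟨(u : ℤ), by rw [zpow_natCast, this]⟩

lemma pg_left_mem_zpowers_mul [Finite G] {a b : G} (hc : Commute a b)
    (h : Nat.Coprime (orderOf a) (orderOf b)) : a ∈ zpowers (a * b) := by
  have key : (a * b) ^ orderOf b = a ^ orderOf b := by
    rw [hc.mul_pow, pow_orderOf_eq_one, mul_one]
  have ha : a ∈ zpowers (a ^ orderOf b) :=
    pg_mem_zpowers_pow_of_coprime a h.symm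
  rw [← key] at ha
  exact zpowers_le.mpr (mem_zpowers_iff.mpr ⟨(orderOf b : ℤ), zpow_natCast _ _⟩) ha

lemma pg_right_mem_zpowers_mul [Finite G] {a b : G} (hc : Commute a b)
    (h : Nat.Coprime (orderOf a) (orderOf b)) : b ∈ zpowers (a * b) := by
  rw [hc.eq]
  exact pg_left_mem_zpowers_mul hc.symm h.symm

lemma pg_mem_zpowers_of_orderOf_dvd [Finite G] {x a b : G}
    (ha : a ∈ zpowers x) (hb : b ∈ zpowers x) (hd : orderOf a ∣ orderOf b) :
    a ∈ zpowers b := by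
  obtain ⟨i, hi0⟩ := mem_powers_iff_mem_zpowers.mpr ha
  obtain ⟨j, hj0⟩ := mem_powers_iff_mem_zpowers.mpr hb
  have hi : x ^ i = a := hi0
  have hj : x ^ j = b := hj0
  set N := orderOf x with hN
  have hN0 : 0 < N := orderOf_pos x
  -- step 1 : x ^ gcd N j ∈ zpowers b
  have hbz : x ^ (Nat.gcd N j) ∈ zpowers b := by
    have hbez := Nat.gcd_eq_gcd_ab N j
    have : (x : G) ^ ((Nat.gcd N j : ℤ)) = (x ^ (j:ℤ)) ^ (Nat.gcdB N j) := by
      rw [hbez, zpow_add, zpow_mul, zpow_mul, zpow_natCast, pow_orderOf_eq_one,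
        one_zpow, one_mul]
    rw [zpow_natCast, zpow_natCast, hj] at this
    exact mem_zpowers_iff.mpr ⟨_, this.symm⟩
  -- step 2 : gcd N j ∣ i
  have horda : orderOf a = N / Nat.gcd N i := by rw [← hi, orderOf_pow]
  have hordb : orderOf b = N / Nat.gcd N j := by rw [← hj, orderOf_pow]
  have hg1 : Nat.gcd N i ∣ N := Nat.gcd_dvd_left _ _
  have hg2 : Nat.gcd N j ∣ N := Nat.gcd_dvd_left _ _
  have hdvd : Nat.gcd N j ∣ Nat.gcd N i := by
    rw [horda, hordb] at hd
    obtain ⟨t, ht⟩ := hd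
    have h1 : 0 < N / Nat.gcd N i := Nat.div_pos (Nat.le_of_dvd hN0 hg1) (Nat.gcd_pos_of_pos_left _ hN0)
    have e1 : Nat.gcd N i * (N / Nat.gcd N i) = N := Nat.mul_div_cancel' hg1
    have e2 : Nat.gcd N j * (N / Nat.gcd N j) = N := Nat.mul_div_cancel' hg2
    rw [ht] at e2
    refine ⟨t, ?_⟩
    have key : Nat.gcd N i * (N / Nat.gcd N i) = Nat.gcd N j * t * (N / Nat.gcd N i) := by
      conv_lhs => rw [e1, ← e2]
      ring
    exact Nat.eq_of_mul_eq_mul_right h1 key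
  have hgi : Nat.gcd N j ∣ i := hdvd.trans (Nat.gcd_dvd_right _ _)
  have hmem : a ∈ zpowers (x ^ (Nat.gcd N j)) := by
    rw [← hi, ← Nat.mul_div_cancel' hgi, pow_mul]
    exact mem_zpowers_iff.mpr ⟨(i / Nat.gcd N j : ℕ), by rw [zpow_natCast]⟩
  exact zpowers_le.mpr hbz hmem

lemma pg_zpowers_comparable [Finite G] {x a b : G} {r : ℕ} (hr : r.Prime)
    (hx : ∃ n, orderOf x = r ^ n) (ha : a ∈ zpowers x) (hb : b ∈ zpowers x) :
    a ∈ zpowers b ∨ b ∈ zpowers a := by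
  obtain ⟨n, hn⟩ := hx
  have hda := orderOf_dvd_of_mem_zpowers ha
  have hdb := orderOf_dvd_of_mem_zpowers hb
  rw [hn] at hda hdb
  obtain ⟨i, hi, hia⟩ := (Nat.dvd_prime_pow hr).mp hda
  obtain ⟨j, hj, hjb⟩ := (Nat.dvd_prime_pow hr).mp hdb
  rcases le_total i j with hle | hle
  · exact Or.inl (pg_mem_zpowers_of_orderOf_dvd ha hb (by rw [hia, hjb]; exact pow_dvd_pow r hle))
  · exact Or.inr (pg_mem_zpowers_of_orderOf_dvd hb ha (by rw [hia, hjb]; exact pow_dvd_pow r hle))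

end Helpers

section Core
variable {G : Type*} [Group G]

lemma pg_c4_core (h : pgC4Free G) {A B u1 u2 : G}
    (hA1 : A ∈ zpowers u1) (hA2 : A ∈ zpowers u2)
    (hB1 : B ∈ zpowers u1) (hB2 : B ∈ zpowers u2)
    (hAu1 : A ≠ u1) (hAB : A ≠ B) (hAu2 : A ≠ u2)
    (hu1B : u1 ≠ B) (hu12 : u1 ≠ u2) (hBu2 : B ≠ u2)
    (hnAB : ¬(A ∈ zpowers B ∨ B ∈ zpowers A))
    (hnu : ¬(u1 ∈ zpowers u2 ∨ u2 ∈ zpowers u1)) : False :=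
  h ⟨A, u1, B, u2, hAu1, hAB, hAu2, hu1B, hu12, hBu2.symm.symm,
    ⟨hAu1, Or.inl hA1⟩, ⟨hu1B, Or.inr hB1⟩, ⟨hBu2, Or.inl hB2⟩, ⟨hAu2.symm, Or.inr hA2⟩,
    fun hadj => hnAB hadj.2, fun hadj => hnu hadj.2⟩

lemma pg_ne_of_orderOf_ne {a b : G} (h : orderOf a ≠ orderOf b) : a ≠ b :=
  fun e => h (by rw [e])

lemma pg_not_adj_of_orders {a b : G} (hab : ¬ orderOf a ∣ orderOf b)
    (hba : ¬ orderOf b ∣ orderOf a) : ¬(a ∈ zpowers b ∨ b ∈ zpowers a) := by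
  rintro (hm | hm)
  · exact hab (orderOf_dvd_of_mem_zpowers hm)
  · exact hba (orderOf_dvd_of_mem_zpowers hm)

-- q^n does not divide s and s does not divide q^n, for distinct primes etc.
lemma pg_prime_pow_not_dvd_prime {q s : ℕ} (hq : q.Prime) (hs : s.Prime) (hqs : q ≠ s)
    {n : ℕ} (hn : 1 ≤ n) : ¬ q ^ n ∣ s := by
  intro hd
  have : q ∣ s := (dvd_pow_self q (Nat.one_le_iff_ne_zero.mp hn)).trans hd
  exact hqs ((Nat.prime_dvd_prime_iff_eq hq hs).mp this)

lemma pg_prime_not_dvd_prime_pow {q s : ℕ} (hq : q.Prime) (hs : s.Prime) (hqs : q ≠ s)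
    {n : ℕ} : ¬ s ∣ q ^ n := by
  intro hd
  exact hqs ((Nat.prime_dvd_prime_iff_eq hs hq).mp (hs.dvd_of_dvd_pow hd)).symm

end Core

section T
variable {G : Type*} [Group G] [Finite G]


lemma pg_pow_mem_zpowers (a : G) (m : ℕ) : a ^ m ∈ zpowers a :=
  mem_zpowers_iff.mpr ⟨(m : ℤ), zpow_natCast _ _⟩

lemma pg_zpow_mem_zpowers (a : G) (m : ℤ) : a ^ m ∈ zpowers a :=
  mem_zpowers_iff.mpr ⟨m, rfl⟩

-- key cancellation: if za = ub ^ k (k : ℤ) then za ^ m ∈ zpowers (ub ^ m)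
lemma pg_pow_transfer {za ub : G} (hmem : za ∈ zpowers ub) (m : ℕ) :
    za ^ m ∈ zpowers (ub ^ m) := by
  obtain ⟨k, hk⟩ := mem_zpowers_iff.mp hmem
  subst hk
  refine mem_zpowers_iff.mpr ⟨k, ?_⟩
  rw [← zpow_natCast (ub ^ k) m, ← zpow_mul, mul_comm, zpow_mul, zpow_natCast]

lemma pg_part1_c4 (h : pgC4Free G) {p q s n : ℕ}
    (hp : p.Prime) (hq : q.Prime) (hs : s.Prime)
    (hpq : p ≠ q) (hsp : s ≠ p) (hsq : s ≠ q) (hn : 1 ≤ n)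
    {x g z1 z2 : G} (hx : orderOf x = q ^ n) (hg : orderOf g = s)
    (hxg : Commute x g)
    (hz1 : z1 ∈ Subgroup.center G) (hz2 : z2 ∈ Subgroup.center G)
    (hgz1 : Commute g z1) (hgz2 : Commute g z2)
    (ho1 : orderOf z1 = p) (ho2 : orderOf z2 = p)
    (h12 : z1 ∉ zpowers z2) (h21 : z2 ∉ zpowers z1) : False := by
  have hn0 : n ≠ 0 := Nat.one_le_iff_ne_zero.mp hn
  have cqp : Nat.Coprime q p := (Nat.coprime_primes hq hp).mpr (Ne.symm hpq)
  have cps : Nat.Coprime p s := (Nat.coprime_primes hp hs).mpr (Ne.symm hsp)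
  have cqs : Nat.Coprime q s := (Nat.coprime_primes hq hs).mpr (Ne.symm hsq)
  have cQps : Nat.Coprime (q ^ n) (p * s) :=
    Nat.Coprime.mul_right (cqp.pow_left n) (cqs.pow_left n)
  have cc : ∀ w : G, Commute w z1 := fun w => Subgroup.mem_center_iff.mp hz1 w
  have cc2 : ∀ w : G, Commute w z2 := fun w => Subgroup.mem_center_iff.mp hz2 w
  -- generic facts for z ∈ {z1, z2}
  have main : ∀ za zb : G, (∀ w : G, Commute w za) → (∀ w : G, Commute w zb) →
      orderOf za = p → orderOf zb = p →
      x * (za * g) ∈ zpowers (x * (zb * g)) → za ∈ zpowers zb := by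
    intro za zb hca hcb hoa hob hmem
    have hzau : za ∈ zpowers (x * (za * g)) := by
      have e : x * (za * g) = za * (x * g) := by
        rw [← mul_assoc, (hca x).eq, mul_assoc]
      rw [e]
      refine pg_left_mem_zpowers_mul ((hca (x*g)).symm) ?_
      rw [hoa, hxg.orderOf_mul_eq_mul_orderOf_of_coprime (by rw [hx, hg]; exact (cqs.pow_left n)),
        hx, hg]
      exact Nat.Coprime.mul_right (cqp.symm.pow_right n) cps
    have hzaub : za ∈ zpowers (x * (zb * g)) := zpowers_le.mpr hmem hzau
    set m := q ^ n * s with hm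
    have hub_m : (x * (zb * g)) ^ m = zb ^ m := by
      have c1 : Commute x (zb * g) := (hcb x).mul_right hxg
      rw [c1.mul_pow, ((hcb g).symm).mul_pow]
      have hxm : x ^ m = 1 := by
        rw [← orderOf_dvd_iff_pow_eq_one, hx]; exact ⟨s, rfl⟩
      have hgm : g ^ m = 1 := by
        rw [← orderOf_dvd_iff_pow_eq_one, hg]; exact ⟨q ^ n, mul_comm _ _⟩
      rw [hxm, hgm, one_mul, mul_one]
    have h1 : za ^ m ∈ zpowers (zb ^ m) := by
      have := pg_pow_transfer hzaub m
      rwa [hub_m] at this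
    have h2 : za ^ m ∈ zpowers zb := zpowers_le.mpr (pg_pow_mem_zpowers zb m) h1
    have h3 : za ∈ zpowers (za ^ m) := by
      refine pg_mem_zpowers_pow_of_coprime za ?_
      rw [hoa]
      exact Nat.Coprime.mul (cqp.pow_left n) (cps.symm)
    exact zpowers_le.mpr h2 h3
  -- orders
  have hordzg1 : orderOf (z1 * g) = p * s := by
    rw [((cc g).symm).orderOf_mul_eq_mul_orderOf_of_coprime (by rw [ho1, hg]; exact cps), ho1, hg]
  have hordzg2 : orderOf (z2 * g) = p * s := by
    rw [((cc2 g).symm).orderOf_mul_eq_mul_orderOf_of_coprime (by rw [ho2, hg]; exact cps), ho2, hg]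
  have hcx1 : Commute x (z1 * g) := (cc x).mul_right hxg
  have hcx2 : Commute x (z2 * g) := (cc2 x).mul_right hxg
  have hordu1 : orderOf (x * (z1 * g)) = q ^ n * (p * s) := by
    rw [hcx1.orderOf_mul_eq_mul_orderOf_of_coprime (by rw [hx, hordzg1]; exact cQps), hx, hordzg1]
  have hordu2 : orderOf (x * (z2 * g)) = q ^ n * (p * s) := by
    rw [hcx2.orderOf_mul_eq_mul_orderOf_of_coprime (by rw [hx, hordzg2]; exact cQps), hx, hordzg2]
  -- memberships
  have hxu1 : x ∈ zpowers (x * (z1 * g)) :=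
    pg_left_mem_zpowers_mul hcx1 (by rw [hx, hordzg1]; exact cQps)
  have hxu2 : x ∈ zpowers (x * (z2 * g)) :=
    pg_left_mem_zpowers_mul hcx2 (by rw [hx, hordzg2]; exact cQps)
  have hgu1 : g ∈ zpowers (x * (z1 * g)) := by
    have e : x * (z1 * g) = (x * z1) * g := by rw [mul_assoc]
    rw [e]
    refine pg_right_mem_zpowers_mul ((hxg.symm.mul_right (cc g)).symm) ?_
    · rw [(cc x).orderOf_mul_eq_mul_orderOf_of_coprime (by rw [hx, ho1]; exact cqp.pow_left n),
        hx, ho1, hg]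
      exact Nat.Coprime.mul (cqs.pow_left n) cps
  have hgu2 : g ∈ zpowers (x * (z2 * g)) := by
    have e : x * (z2 * g) = (x * z2) * g := by rw [mul_assoc]
    rw [e]
    refine pg_right_mem_zpowers_mul ((hxg.symm.mul_right (cc2 g)).symm) ?_
    · rw [(cc2 x).orderOf_mul_eq_mul_orderOf_of_coprime (by rw [hx, ho2]; exact cqp.pow_left n),
        hx, ho2, hg]
      exact Nat.Coprime.mul (cqs.pow_left n) cps
  -- distinctness
  have hq0 : 0 < q ^ n := pow_pos hq.pos n
  have hps2 : 2 ≤ p * s := by nlinarith [hp.two_le, hs.two_le]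
  have key1 : ∀ m k : ℕ, 0 < m → 2 ≤ k → m ≠ m * k := by
    intro m k hm hk e; nlinarith
  have hqp2 : 2 ≤ q ^ n * p := by nlinarith [hp.two_le]
  have hAu1 : x ≠ x * (z1 * g) := pg_ne_of_orderOf_ne (by rw [hx, hordu1]; exact key1 _ _ hq0 hps2)
  have hAu2 : x ≠ x * (z2 * g) := pg_ne_of_orderOf_ne (by rw [hx, hordu2]; exact key1 _ _ hq0 hps2)
  have hAB : x ≠ g := pg_ne_of_orderOf_ne (by
    rw [hx, hg]; exact fun e => pg_prime_pow_not_dvd_prime hq hs hsq.symm hn (e ▸ dvd_refl _))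
  have hu1B : x * (z1 * g) ≠ g := pg_ne_of_orderOf_ne (by
    rw [hg, hordu1, ← mul_assoc, mul_comm (q ^ n * p) s]; exact (key1 _ _ hs.pos hqp2).symm)
  have hBu2 : g ≠ x * (z2 * g) := pg_ne_of_orderOf_ne (by
    rw [hg, hordu2, ← mul_assoc, mul_comm (q ^ n * p) s]; exact key1 _ _ hs.pos hqp2)
  have hu12 : x * (z1 * g) ≠ x * (z2 * g) := by
    intro e
    have : z1 = z2 := by
      have := mul_left_cancel e
      exact mul_right_cancel this
    exact h21 (this ▸ mem_zpowers z1)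
  -- non-adjacency
  have hnAB : ¬(x ∈ zpowers g ∨ g ∈ zpowers x) := by
    refine pg_not_adj_of_orders ?_ ?_
    · rw [hx, hg]; exact pg_prime_pow_not_dvd_prime hq hs hsq.symm hn
    · rw [hx, hg]; exact pg_prime_not_dvd_prime_pow hq hs hsq.symm
  have hnu : ¬(x * (z1 * g) ∈ zpowers (x * (z2 * g)) ∨ x * (z2 * g) ∈ zpowers (x * (z1 * g))) := by
    rintro (hmem | hmem)
    · exact h12 (main z1 z2 cc cc2 ho1 ho2 hmem)
    · exact h21 (main z2 z1 cc2 cc ho2 ho1 hmem)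
  exact pg_c4_core h hxu1 hxu2 hgu1 hgu2 hAu1 hAB hAu2 hu1B hu12 hBu2 hnAB hnu

end T

section T2
variable {G : Type*} [Group G] [Finite G]

lemma pg_key1 : ∀ m k : ℕ, 0 < m → 2 ≤ k → m ≠ m * k := by
  intro m k hm hk e; nlinarith

-- Part (a): no element of order p^2 commuting with x
lemma pg_parta_c4 (h : pgC4Free G) {p q n : ℕ}
    (hp : p.Prime) (hq : q.Prime) (hpq : p ≠ q) (hn : 1 ≤ n)
    {x w' z : G} (hx : orderOf x = q ^ n) (hw : orderOf w' = p ^ 2)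
    (hxw : Commute x w') (hz : ∀ u : G, Commute u z) (hoz : orderOf z = p)
    (hzw : z ∉ zpowers (w' ^ p)) : False := by
  have hq0 : 0 < q ^ n := pow_pos hq.pos n
  have hp0 : (0:ℕ) < p := hp.pos
  have cqp : Nat.Coprime q p := (Nat.coprime_primes hq hp).mpr (Ne.symm hpq)
  have cQP : Nat.Coprime (q ^ n) (p ^ 2) := Nat.Coprime.pow_right 2 (Nat.Coprime.pow_left n cqp)
  have hB : orderOf (w' ^ p) = p := by
    rw [orderOf_pow, hw, Nat.gcd_comm, Nat.gcd_eq_left (dvd_pow_self p two_ne_zero), pow_two,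
      Nat.mul_div_cancel_left _ hp.pos]
  have hBne1 : w' ^ p ≠ 1 := by
    intro e; rw [e, orderOf_one] at hB; exact hp.one_lt.ne' hB.symm
  -- w2 = w' * z has order p^2
  have hcwz : Commute w' z := hz w'
  have hw2p : (w' * z) ^ p = w' ^ p := by
    rw [hcwz.mul_pow]
    have : z ^ p = 1 := by rw [← hoz, pow_orderOf_eq_one]
    rw [this, mul_one]
  have hw2 : orderOf (w' * z) = p ^ 2 := by
    have h1 : (w' * z) ^ (p ^ 2) = 1 := by
      rw [hcwz.mul_pow]
      have e1 : w' ^ p ^ 2 = 1 := by rw [← hw, pow_orderOf_eq_one]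
      have e2 : z ^ p ^ 2 = 1 := by
        rw [← orderOf_dvd_iff_pow_eq_one, hoz]; exact dvd_pow_self p two_ne_zero
      rw [e1, e2, mul_one]
    obtain ⟨j, hj, hje⟩ := (Nat.dvd_prime_pow hp).mp (orderOf_dvd_iff_pow_eq_one.mpr h1)
    interval_cases j
    · rw [pow_zero] at hje
      have : w' * z = 1 := orderOf_eq_one_iff.mp hje
      rw [← hw2p, this, one_pow] at hBne1; exact absurd rfl hBne1
    · exfalso
      have : (w' * z) ^ p = 1 := by
        rw [← orderOf_dvd_iff_pow_eq_one, hje, pow_one]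
      rw [hw2p] at this; exact hBne1 this
    · exact hje
  have hcxw2 : Commute x (w' * z) := hxw.mul_right (hz x)
  have hordu1 : orderOf (x * w') = q ^ n * p ^ 2 := by
    rw [hxw.orderOf_mul_eq_mul_orderOf_of_coprime (by rw [hx, hw]; exact cQP), hx, hw]
  have hordu2 : orderOf (x * (w' * z)) = q ^ n * p ^ 2 := by
    rw [hcxw2.orderOf_mul_eq_mul_orderOf_of_coprime (by rw [hx, hw2]; exact cQP), hx, hw2]
  -- memberships
  have hxu1 : x ∈ zpowers (x * w') :=
    pg_left_mem_zpowers_mul hxw (by rw [hx, hw]; exact cQP)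
  have hxu2 : x ∈ zpowers (x * (w' * z)) :=
    pg_left_mem_zpowers_mul hcxw2 (by rw [hx, hw2]; exact cQP)
  have hw'u1 : w' ∈ zpowers (x * w') :=
    pg_right_mem_zpowers_mul hxw (by rw [hx, hw]; exact cQP)
  have hw2u2 : w' * z ∈ zpowers (x * (w' * z)) :=
    pg_right_mem_zpowers_mul hcxw2 (by rw [hx, hw2]; exact cQP)
  have hBu1 : w' ^ p ∈ zpowers (x * w') :=
    zpowers_le.mpr hw'u1 (pg_pow_mem_zpowers w' p)
  have hBu2 : w' ^ p ∈ zpowers (x * (w' * z)) := by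
    rw [← hw2p]
    exact zpowers_le.mpr hw2u2 (pg_pow_mem_zpowers (w' * z) p)
  -- powers for the key computation
  have hpow : ∀ v w : G, Commute x w → orderOf w = p ^ 2 → w ^ p = w' ^ p →
      v = x * w → v ^ (q ^ n * p) = (w' ^ p) ^ (q ^ n) := by
    intro v w hc how hwp hv
    have e1 : x ^ (q ^ n * p) = 1 := by
      rw [← orderOf_dvd_iff_pow_eq_one, hx]; exact ⟨p, rfl⟩
    rw [hv, hc.mul_pow, e1, one_mul, mul_comm (q ^ n) p, pow_mul, hwp, ← pow_mul,
      mul_comm p (q ^ n), pow_mul]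
  have hu1pow : (x * w') ^ (q ^ n * p) = (w' ^ p) ^ (q ^ n) :=
    hpow _ w' hxw hw rfl rfl
  have hu2pow : (x * (w' * z)) ^ (q ^ n * p) = (w' ^ p) ^ (q ^ n) :=
    hpow _ (w' * z) hcxw2 hw2 hw2p rfl
  -- z in zpowers v leads to contradiction
  have hzv : ∀ v : G, orderOf v = q ^ n * p ^ 2 → v ^ (q ^ n * p) = (w' ^ p) ^ (q ^ n) →
      z ∈ zpowers v → False := by
    intro v hov hvp hzmem
    obtain ⟨k, hk⟩ := Subgroup.mem_zpowers_iff.mp hzmem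
    have hz1 : v ^ (k * p) = 1 := by
      rw [zpow_mul, hk, zpow_natCast, ← hoz, pow_orderOf_eq_one]
    have hdvd : ((q ^ n * p : ℕ) : ℤ) * p ∣ k * p := by
      have := orderOf_dvd_iff_zpow_eq_one.mpr hz1
      rw [hov] at this
      convert this using 2
      push_cast; ring
    have hdvd2 : ((q ^ n * p : ℕ) : ℤ) ∣ k :=
      (mul_dvd_mul_iff_right (by exact_mod_cast hp.pos.ne' : (p:ℤ) ≠ 0)).mp hdvd
    obtain ⟨t, ht⟩ := hdvd2
    have : z ∈ zpowers ((w' ^ p) ^ (q ^ n)) := by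
      rw [← hk, ht, zpow_mul, zpow_natCast, hvp]
      exact pg_zpow_mem_zpowers _ t
    exact hzw (zpowers_le.mpr (pg_pow_mem_zpowers (w' ^ p) (q ^ n)) this)
  -- distinctness
  have hp2ge : 2 ≤ p ^ 2 := by nlinarith [hp.two_le]
  have hAu1 : x ≠ x * w' :=
    pg_ne_of_orderOf_ne (by rw [hx, hordu1]; exact pg_key1 _ _ hq0 hp2ge)
  have hAu2 : x ≠ x * (w' * z) :=
    pg_ne_of_orderOf_ne (by rw [hx, hordu2]; exact pg_key1 _ _ hq0 hp2ge)
  have hAB : x ≠ w' ^ p := pg_ne_of_orderOf_ne (by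
    rw [hx, hB]
    intro e
    exact pg_prime_not_dvd_prime_pow hq hp hpq.symm ⟨1, by rw [e, mul_one]⟩)
  have he1 : q ^ n * p ^ 2 = p * (q ^ n * p) := by ring
  have hqnp2 : 2 ≤ q ^ n * p := by nlinarith [hp.two_le]
  have hu1B : x * w' ≠ w' ^ p := pg_ne_of_orderOf_ne (by
    rw [hordu1, hB, he1]; exact (pg_key1 _ _ hp.pos hqnp2).symm)
  have hBu2' : w' ^ p ≠ x * (w' * z) := pg_ne_of_orderOf_ne (by
    rw [hordu2, hB, he1]; exact pg_key1 _ _ hp.pos hqnp2)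
  have hu12 : x * w' ≠ x * (w' * z) := by
    intro e
    have hz1' : z = 1 := by
      have := mul_left_cancel e
      have := mul_left_cancel ((mul_one w').symm ▸ this : w' * 1 = w' * z)
      exact this.symm
    rw [hz1', orderOf_one] at hoz; exact hp.one_lt.ne' hoz.symm
  have hnAB : ¬(x ∈ zpowers (w' ^ p) ∨ w' ^ p ∈ zpowers x) := by
    refine pg_not_adj_of_orders ?_ ?_
    · rw [hx, hB]; exact pg_prime_pow_not_dvd_prime hq hp hpq.symm hn
    · rw [hx, hB]; exact pg_prime_not_dvd_prime_pow hq hp hpq.symm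
  have hnu : ¬(x * w' ∈ zpowers (x * (w' * z)) ∨ x * (w' * z) ∈ zpowers (x * w')) := by
    have he2 : x * (w' * z) = (x * w') * z := by rw [mul_assoc]
    rintro (hmem | hmem)
    · have : z ∈ zpowers (x * (w' * z)) := by
        have h1 : ((x * w')⁻¹ : G) ∈ zpowers (x * (w' * z)) := inv_mem hmem
        have h2 : z = (x * w')⁻¹ * (x * (w' * z)) := by
          rw [he2, inv_mul_cancel_left]
        have h3 := mul_mem h1 (mem_zpowers (x * (w' * z)))
        rwa [← h2] at h3
      exact hzv _ hordu2 hu2pow this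
    · have : z ∈ zpowers (x * w') := by
        have h2 : z = (x * w')⁻¹ * (x * (w' * z)) := by
          rw [he2, inv_mul_cancel_left]
        have h3 := mul_mem (inv_mem (mem_zpowers (x * w'))) hmem
        rwa [← h2] at h3
      exact hzv _ hordu1 hu1pow this
  exact pg_c4_core h hxu1 hxu2 hBu1 hBu2 hAu1 hAB hAu2 hu1B hu12 hBu2' hnAB hnu

end T2

section T3
variable {G : Type*} [Group G] [Finite G]

-- Claim 2: two q-elements above x are comparable
lemma pg_claim2 (h : pgC4Free G) {p q : ℕ}
    (hp : p.Prime) (hq : q.Prime) (hpq : p ≠ q)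
    {x z1 g g2 : G} (hx1 : x ≠ 1)
    {a b : ℕ} (hog : orderOf g = q ^ a) (hog2 : orderOf g2 = q ^ b)
    (hz1c : ∀ u : G, Commute u z1) (ho1 : orderOf z1 = p)
    (hxg : x ∈ zpowers g) (hxg2 : x ∈ zpowers g2) :
    g ∈ zpowers g2 ∨ g2 ∈ zpowers g := by
  by_contra hcon
  push_neg at hcon
  obtain ⟨hc1, hc2⟩ := hcon
  have hq0 : (1:ℕ) < q := hq.one_lt
  -- a, b ≥ 1
  have hga : 1 ≤ a := by
    by_contra hh
    have : a = 0 := by omega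
    rw [this, pow_zero] at hog
    have : x = 1 := by
      have := orderOf_dvd_of_mem_zpowers hxg
      rw [hog, Nat.dvd_one] at this
      exact orderOf_eq_one_iff.mp this
    exact hx1 this
  have hgb : 1 ≤ b := by
    by_contra hh
    have : b = 0 := by omega
    rw [this, pow_zero] at hog2
    have : x = 1 := by
      have := orderOf_dvd_of_mem_zpowers hxg2
      rw [hog2, Nat.dvd_one] at this
      exact orderOf_eq_one_iff.mp this
    exact hx1 this
  have cpq : Nat.Coprime p q := (Nat.coprime_primes hp hq).mpr hpq
  have hcg : Commute z1 g := (hz1c g).symm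
  have hcg2 : Commute z1 g2 := (hz1c g2).symm
  have hordu1 : orderOf (z1 * g) = p * q ^ a := by
    rw [hcg.orderOf_mul_eq_mul_orderOf_of_coprime (by rw [ho1, hog]; exact cpq.pow_right a),
      ho1, hog]
  have hordu2 : orderOf (z1 * g2) = p * q ^ b := by
    rw [hcg2.orderOf_mul_eq_mul_orderOf_of_coprime (by rw [ho1, hog2]; exact cpq.pow_right b),
      ho1, hog2]
  have hgu1 : g ∈ zpowers (z1 * g) :=
    pg_right_mem_zpowers_mul hcg (by rw [ho1, hog]; exact cpq.pow_right a)
  have hgu2 : g2 ∈ zpowers (z1 * g2) :=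
    pg_right_mem_zpowers_mul hcg2 (by rw [ho1, hog2]; exact cpq.pow_right b)
  have hxu1 : x ∈ zpowers (z1 * g) := zpowers_le.mpr hgu1 hxg
  have hxu2 : x ∈ zpowers (z1 * g2) := zpowers_le.mpr hgu2 hxg2
  have hz1u1 : z1 ∈ zpowers (z1 * g) :=
    pg_left_mem_zpowers_mul hcg (by rw [ho1, hog]; exact cpq.pow_right a)
  have hz1u2 : z1 ∈ zpowers (z1 * g2) :=
    pg_left_mem_zpowers_mul hcg2 (by rw [ho1, hog2]; exact cpq.pow_right b)
  -- order of x is a nontrivial power of q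
  obtain ⟨m, hm, hxm⟩ := (Nat.dvd_prime_pow hq).mp
    (hog ▸ orderOf_dvd_of_mem_zpowers hxg)
  have hm1 : 1 ≤ m := by
    by_contra hh
    have : m = 0 := by omega
    rw [this, pow_zero] at hxm
    exact hx1 (orderOf_eq_one_iff.mp hxm)
  -- u1 ^ p ∈ zpowers (u2 ^ p) leads to g ∈ zpowers g2
  have main : ∀ w w2 : G, Commute z1 w → Commute z1 w2 → (∃ c, orderOf w = q ^ c) →
      z1 * w ∈ zpowers (z1 * w2) → w ∈ zpowers w2 := by
    intro w w2 hcw hcw2 hcord hmem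
    obtain ⟨c, hc⟩ := hcord
    have hz1p : z1 ^ p = 1 := by rw [← ho1, pow_orderOf_eq_one]
    have e1 : (z1 * w) ^ p = w ^ p := by rw [hcw.mul_pow, hz1p, one_mul]
    have e2 : (z1 * w2) ^ p = w2 ^ p := by rw [hcw2.mul_pow, hz1p, one_mul]
    have h1 := pg_pow_transfer hmem p
    rw [e1, e2] at h1
    have h2 : w ^ p ∈ zpowers w2 := zpowers_le.mpr (pg_pow_mem_zpowers w2 p) h1
    have h3 : w ∈ zpowers (w ^ p) :=
      pg_mem_zpowers_pow_of_coprime w (by rw [hc]; exact cpq.pow_right c)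
    exact zpowers_le.mpr h2 h3
  -- distinctness
  have hA1 : x ≠ z1 * g := pg_ne_of_orderOf_ne (by
    rw [hxm, hordu1]
    intro e
    exact pg_prime_not_dvd_prime_pow hq hp hpq.symm ((e.symm : p * q ^ a = q ^ m) ▸ dvd_mul_right p (q ^ a)))
  have hA2 : x ≠ z1 * g2 := pg_ne_of_orderOf_ne (by
    rw [hxm, hordu2]
    intro e
    exact pg_prime_not_dvd_prime_pow hq hp hpq.symm ((e.symm : p * q ^ b = q ^ m) ▸ dvd_mul_right p (q ^ b)))
  have hAB : x ≠ z1 := pg_ne_of_orderOf_ne (by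
    rw [hxm, ho1]
    intro e
    exact pg_prime_not_dvd_prime_pow hq hp hpq.symm ⟨1, by rw [e, mul_one]⟩)
  have hqa2 : 2 ≤ q ^ a := by
    calc 2 ≤ q := hq.two_le
    _ = q ^ 1 := (pow_one q).symm
    _ ≤ q ^ a := Nat.pow_le_pow_right hq.pos hga
  have hqb2 : 2 ≤ q ^ b := by
    calc 2 ≤ q := hq.two_le
    _ = q ^ 1 := (pow_one q).symm
    _ ≤ q ^ b := Nat.pow_le_pow_right hq.pos hgb
  have hu1B : z1 * g ≠ z1 := pg_ne_of_orderOf_ne (by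
    rw [hordu1, ho1]; exact (pg_key1 _ _ hp.pos hqa2).symm)
  have hBu2 : z1 ≠ z1 * g2 := pg_ne_of_orderOf_ne (by
    rw [hordu2, ho1]; exact pg_key1 _ _ hp.pos hqb2)
  have hu12 : z1 * g ≠ z1 * g2 := by
    intro e
    exact hc1 ((mul_left_cancel e) ▸ mem_zpowers g)
  have hnAB : ¬(x ∈ zpowers z1 ∨ z1 ∈ zpowers x) := by
    refine pg_not_adj_of_orders ?_ ?_
    · rw [hxm, ho1]; exact pg_prime_pow_not_dvd_prime hq hp hpq.symm hm1
    · rw [hxm, ho1]; exact pg_prime_not_dvd_prime_pow hq hp hpq.symm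
  have hnu : ¬(z1 * g ∈ zpowers (z1 * g2) ∨ z1 * g2 ∈ zpowers (z1 * g)) := by
    rintro (hmem | hmem)
    · exact hc1 (main g g2 hcg hcg2 ⟨a, hog⟩ hmem)
    · exact hc2 (main g2 g hcg2 hcg ⟨b, hog2⟩ hmem)
  exact pg_c4_core h hxu1 hxu2 hz1u1 hz1u2 hA1 hAB hA2 hu1B hu12 hBu2 hnAB hnu

end T3

section T4
variable {G : Type*} [Group G] [Finite G]

lemma pg_pow_div_self {q m : ℕ} (hq : 0 < q) (hm : 1 ≤ m) : q ^ m / q = q ^ (m - 1) := by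
  have e : q ^ m = q ^ (m - 1) * q := by
    rw [← pow_succ]
    congr 1
    omega
  rw [e, Nat.mul_div_cancel _ hq]

lemma pg_claim1_c4 (h : pgC4Free G) {p q n : ℕ}
    (hp : p.Prime) (hq : q.Prime) (hpq : p ≠ q) (hn : 2 ≤ n)
    {x z1 a : G} (hx : orderOf x = q ^ n)
    (hz1c : ∀ u : G, Commute u z1) (ho1 : orderOf z1 = p)
    (hxa : Commute x a) (ha : orderOf a = q) (hax : a ∉ zpowers x) : False := by
  have hn1 : 1 ≤ n := by omega
  have hn0 : n ≠ 0 := by omega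
  have cpq : Nat.Coprime p q := (Nat.coprime_primes hp hq).mpr hpq
  have cpqn : Nat.Coprime p (q ^ n) := cpq.pow_right n
  have hqn2 : 2 ≤ q ^ n := by
    calc 2 ≤ q := hq.two_le
    _ = q ^ 1 := (pow_one q).symm
    _ ≤ q ^ n := Nat.pow_le_pow_right hq.pos hn1
  -- order of x * a is q ^ n
  have hxqn1 : x ^ q ^ (n-1) ≠ 1 := by
    intro hd
    rw [← orderOf_dvd_iff_pow_eq_one, hx] at hd
    have := (Nat.pow_dvd_pow_iff_le_right hq.one_lt).mp hd
    omega
  have hxa_pow : (x * a) ^ q ^ (n-1) = x ^ q ^ (n-1) := by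
    rw [hxa.mul_pow]
    have : a ^ q ^ (n-1) = 1 := by
      rw [← orderOf_dvd_iff_pow_eq_one, ha]
      exact dvd_pow_self q (by omega)
    rw [this, mul_one]
  have horda : orderOf (x * a) = q ^ n := by
    have h1 : (x * a) ^ q ^ n = 1 := by
      rw [hxa.mul_pow]
      have e1 : x ^ q ^ n = 1 := by rw [← hx, pow_orderOf_eq_one]
      have e2 : a ^ q ^ n = 1 := by
        rw [← orderOf_dvd_iff_pow_eq_one, ha]; exact dvd_pow_self q hn0
      rw [e1, e2, mul_one]
    obtain ⟨j, hj, hje⟩ := (Nat.dvd_prime_pow hq).mp (orderOf_dvd_iff_pow_eq_one.mpr h1)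
    rcases Nat.lt_or_ge j n with hlt | hge
    · exfalso
      have : (x * a) ^ q ^ (n-1) = 1 := by
        rw [← orderOf_dvd_iff_pow_eq_one, hje]
        exact pow_dvd_pow q (by omega)
      rw [hxa_pow] at this
      exact hxqn1 this
    · have hjn : j = n := by omega
      rw [hje, hjn]
  -- B = x ^ (q ^ (n-1)) has order q
  have hB : orderOf (x ^ q ^ (n-1)) = q := by
    rw [orderOf_pow, hx, Nat.gcd_comm, Nat.gcd_eq_left (pow_dvd_pow q (by omega)),
      Nat.pow_div (by omega) hq.pos]
    have e1 : n - (n - 1) = 1 := by omega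
    rw [e1, pow_one]
  -- orders of u1 u2
  have hcz1x : Commute z1 x := (hz1c x).symm
  have hcz1xa : Commute z1 (x * a) := (hz1c (x * a)).symm
  have hordu1 : orderOf (z1 * x) = p * q ^ n := by
    rw [hcz1x.orderOf_mul_eq_mul_orderOf_of_coprime (by rw [ho1, hx]; exact cpqn), ho1, hx]
  have hordu2 : orderOf (z1 * (x * a)) = p * q ^ n := by
    rw [hcz1xa.orderOf_mul_eq_mul_orderOf_of_coprime (by rw [ho1, horda]; exact cpqn),
      ho1, horda]
  -- memberships
  have hz1u1 : z1 ∈ zpowers (z1 * x) :=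
    pg_left_mem_zpowers_mul hcz1x (by rw [ho1, hx]; exact cpqn)
  have hz1u2 : z1 ∈ zpowers (z1 * (x * a)) :=
    pg_left_mem_zpowers_mul hcz1xa (by rw [ho1, horda]; exact cpqn)
  have hxu1 : x ∈ zpowers (z1 * x) :=
    pg_right_mem_zpowers_mul hcz1x (by rw [ho1, hx]; exact cpqn)
  have hxau2 : x * a ∈ zpowers (z1 * (x * a)) :=
    pg_right_mem_zpowers_mul hcz1xa (by rw [ho1, horda]; exact cpqn)
  have hBu1 : x ^ q ^ (n-1) ∈ zpowers (z1 * x) :=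
    zpowers_le.mpr hxu1 (pg_pow_mem_zpowers x _)
  have hBu2 : x ^ q ^ (n-1) ∈ zpowers (z1 * (x * a)) := by
    rw [← hxa_pow]
    exact zpowers_le.mpr hxau2 (pg_pow_mem_zpowers (x * a) _)
  -- non-adjacency of u1 u2
  have hmain : ∀ w w2 : G, Commute z1 w → Commute z1 w2 → orderOf w = q ^ n →
      orderOf w2 = q ^ n → z1 * w ∈ zpowers (z1 * w2) → w ∈ zpowers w2 := by
    intro w w2 hcw hcw2 how how2 hmem
    have hz1p : z1 ^ p = 1 := by rw [← ho1, pow_orderOf_eq_one]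
    have e1 : (z1 * w) ^ p = w ^ p := by rw [hcw.mul_pow, hz1p, one_mul]
    have e2 : (z1 * w2) ^ p = w2 ^ p := by rw [hcw2.mul_pow, hz1p, one_mul]
    have h1 := pg_pow_transfer hmem p
    rw [e1, e2] at h1
    have h2 : w ^ p ∈ zpowers w2 := zpowers_le.mpr (pg_pow_mem_zpowers w2 p) h1
    have h3 : w ∈ zpowers (w ^ p) :=
      pg_mem_zpowers_pow_of_coprime w (by rw [how]; exact cpqn)
    exact zpowers_le.mpr h2 h3
  have hnu : ¬(z1 * x ∈ zpowers (z1 * (x * a)) ∨ z1 * (x * a) ∈ zpowers (z1 * x)) := by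
    rintro (hmem | hmem)
    · have hx_in : x ∈ zpowers (x * a) := hmain x (x * a) hcz1x hcz1xa hx horda hmem
      have hxa_in : x * a ∈ zpowers x :=
        pg_mem_zpowers_of_orderOf_dvd (mem_zpowers (x * a)) hx_in (by rw [horda, hx])
      have : a ∈ zpowers x := by
        have h4 := mul_mem (inv_mem (mem_zpowers x)) hxa_in
        rwa [inv_mul_cancel_left] at h4
      exact hax this
    · have hxa_in : x * a ∈ zpowers x := hmain (x * a) x hcz1xa hcz1x horda hx hmem
      have : a ∈ zpowers x := by
        have h4 := mul_mem (inv_mem (mem_zpowers x)) hxa_in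
        rwa [inv_mul_cancel_left] at h4
      exact hax this
  -- distinctness
  have hA1 : z1 ≠ z1 * x := pg_ne_of_orderOf_ne (by
    rw [ho1, hordu1]; exact pg_key1 _ _ hp.pos hqn2)
  have hA2 : z1 ≠ z1 * (x * a) := pg_ne_of_orderOf_ne (by
    rw [ho1, hordu2]; exact pg_key1 _ _ hp.pos hqn2)
  have hAB : z1 ≠ x ^ q ^ (n-1) := pg_ne_of_orderOf_ne (by rw [ho1, hB]; exact hpq)
  have hsplit : p * q ^ n = q * (p * q ^ (n-1)) := by
    have en : q ^ n = q ^ (n-1) * q := by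
      rw [← pow_succ]; congr 1; omega
    rw [en]; ring
  have hpq1 : 2 ≤ p * q ^ (n-1) := by nlinarith [hp.two_le, pow_pos hq.pos (n-1)]
  have hu1B : z1 * x ≠ x ^ q ^ (n-1) := pg_ne_of_orderOf_ne (by
    rw [hordu1, hB, hsplit]; exact (pg_key1 _ _ hq.pos hpq1).symm)
  have hBu2' : x ^ q ^ (n-1) ≠ z1 * (x * a) := pg_ne_of_orderOf_ne (by
    rw [hordu2, hB, hsplit]; exact pg_key1 _ _ hq.pos hpq1)
  have hu12 : z1 * x ≠ z1 * (x * a) := by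
    intro e
    have e2 : x = x * a := mul_left_cancel e
    have e3 : a = 1 := by
      have := mul_left_cancel ((mul_one x).symm ▸ e2 : x * 1 = x * a)
      exact this.symm
    rw [e3, orderOf_one] at ha
    exact hq.one_lt.ne' ha.symm
  have hnAB : ¬(z1 ∈ zpowers (x ^ q ^ (n-1)) ∨ x ^ q ^ (n-1) ∈ zpowers z1) := by
    refine pg_not_adj_of_orders ?_ ?_
    · rw [ho1, hB]
      exact fun hd => hpq ((Nat.prime_dvd_prime_iff_eq hp hq).mp hd)
    · rw [ho1, hB]
      exact fun hd => hpq ((Nat.prime_dvd_prime_iff_eq hq hp).mp hd).symm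
  exact pg_c4_core h hz1u1 hz1u2 hBu1 hBu2 hA1 hAB hA2 hu1B hu12 hBu2' hnAB hnu

lemma pg_claim1 (h : pgC4Free G) {p q n : ℕ}
    (hp : p.Prime) (hq : q.Prime) (hpq : p ≠ q) (hn : 2 ≤ n)
    {x z1 : G} (hx : orderOf x = q ^ n)
    (hz1c : ∀ u : G, Commute u z1) (ho1 : orderOf z1 = p) :
    ∀ w : G, Commute x w → (∃ m, orderOf w = q ^ m) → w ∈ zpowers x ∨ x ∈ zpowers w := by
  haveI : Fact q.Prime := ⟨hq⟩
  have hx1 : x ≠ 1 := by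
    intro e
    rw [e, orderOf_one] at hx
    have : 1 < q ^ n := Nat.one_lt_pow (by omega) hq.one_lt
    omega
  suffices H : ∀ N : ℕ, ∀ w : G, orderOf w = N → Commute x w → (∃ m, orderOf w = q ^ m) →
      (w ∈ zpowers x ∨ x ∈ zpowers w) by
    exact fun w hcw hqw => H (orderOf w) w rfl hcw hqw
  intro N
  induction N using Nat.strong_induction_on with
  | _ N ih =>
    rintro w hwN hcw ⟨m, hqm⟩
    by_contra hcon
    push_neg at hcon
    obtain ⟨hcon1, hcon2⟩ := hcon
    have hm1 : 1 ≤ m := by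
      by_contra hh
      have hm0 : m = 0 := by omega
      rw [hm0, pow_zero] at hqm
      exact hcon1 (orderOf_eq_one_iff.mp hqm ▸ one_mem _)
    -- order of w ^ q
    have hwq_ord : orderOf (w ^ q) = q ^ (m - 1) := by
      rw [orderOf_pow, hqm, Nat.gcd_comm, Nat.gcd_eq_left (dvd_pow_self q (by omega))]
      exact pg_pow_div_self hq.pos (by omega)
    have hlt : q ^ (m - 1) < N := by
      rw [← hwN, hqm]
      exact Nat.pow_lt_pow_right hq.one_lt (by omega)
    rcases ih (q ^ (m-1)) hlt (w ^ q) hwq_ord (hcw.pow_right q) ⟨m - 1, hwq_ord⟩ with h1 | h1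
    · -- w ^ q ∈ zpowers x
      by_cases hcase : orderOf (w ^ q) = q ^ n
      · have hmem : x ∈ zpowers (w ^ q) :=
          pg_mem_zpowers_of_orderOf_dvd (mem_zpowers x) h1 (by rw [hx, hcase])
        exact hcon2 (zpowers_le.mpr (pg_pow_mem_zpowers w q) hmem)
      · have hdvd : orderOf (w ^ q) ∣ q ^ (n - 1) := by
          have hd := orderOf_dvd_of_mem_zpowers h1
          rw [hx, hwq_ord] at hd
          rw [hwq_ord]
          rw [hwq_ord] at hcase
          have hle := (Nat.pow_dvd_pow_iff_le_right hq.one_lt).mp hd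
          have : m - 1 ≠ n := fun e => hcase (by rw [e])
          exact pow_dvd_pow q (by omega)
        have hordxq : orderOf (x ^ q) = q ^ (n - 1) := by
          rw [orderOf_pow, hx, Nat.gcd_comm, Nat.gcd_eq_left (dvd_pow_self q (by omega))]
          exact pg_pow_div_self hq.pos (by omega)
        have h2 : w ^ q ∈ zpowers (x ^ q) :=
          pg_mem_zpowers_of_orderOf_dvd h1 (pg_pow_mem_zpowers x q) (by rw [hordxq]; exact hdvd)
        obtain ⟨k, hk⟩ := mem_zpowers_iff.mp h2
        have hvq : (x ^ k) ^ (q : ℕ) = w ^ q := by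
          rw [← hk, ← zpow_natCast x q, ← zpow_mul, mul_comm, zpow_mul, zpow_natCast]
        have hcwv : Commute w (x ^ k) := (hcw.symm).zpow_right k
        have haq : (w * (x ^ k)⁻¹) ^ q = 1 := by
          rw [(hcwv.inv_right).mul_pow, inv_pow, hvq, mul_inv_cancel]
        have hane : w * (x ^ k)⁻¹ ≠ 1 := by
          intro e
          exact hcon1 (mul_inv_eq_one.mp e ▸ pg_zpow_mem_zpowers x k)
        have hax : w * (x ^ k)⁻¹ ∉ zpowers x := by
          intro hmem
          have h4 := mul_mem hmem (pg_zpow_mem_zpowers x k)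
          rw [inv_mul_cancel_right] at h4
          exact hcon1 h4
        have hoa : orderOf (w * (x ^ k)⁻¹) = q := orderOf_eq_prime haq hane
        have hcxa : Commute x (w * (x ^ k)⁻¹) :=
          hcw.mul_right (((Commute.refl x).zpow_right k).inv_right)
        exact pg_claim1_c4 h hp hq hpq hn hx hz1c ho1 hcxa hoa hax
    · exact hcon2 (zpowers_le.mpr (pg_pow_mem_zpowers w q) h1)

end T4

section T5

lemma pg_two_primes (p q : ℕ) : ∀ n : ℕ, n ≠ 0 →
    (∀ r : ℕ, r.Prime → r ∣ n → (r = p ∨ r = q)) → ∃ a b : ℕ, n = p ^ a * q ^ b := by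
  intro n
  induction n using Nat.strong_induction_on with
  | _ n ih =>
    intro hn0 hr
    rcases eq_or_ne n 1 with rfl | h1
    · exact ⟨0, 0, by norm_num⟩
    · obtain ⟨r, hrp, hrd⟩ := Nat.exists_prime_and_dvd h1
      obtain ⟨m, rfl⟩ := hrd
      have hm0 : m ≠ 0 := by rintro rfl; simp at hn0
      have hmlt : m < r * m := by
        have := hrp.one_lt
        nlinarith [Nat.pos_of_ne_zero hm0]
      obtain ⟨a, b, hab⟩ := ih m hmlt hm0 (fun s hs hsd => hr s hs (hsd.mul_left r))
      rcases hr r hrp ⟨m, rfl⟩ with rfl | rfl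
      · exact ⟨a + 1, b, by rw [hab]; ring⟩
      · exact ⟨a, b + 1, by rw [hab]; ring⟩

variable {Γ : Type*} [Group Γ] [Finite Γ]

lemma pg_index_bound {p q : ℕ} (hp : p.Prime) (hq : q.Prime) (hpq : p ≠ q)
    (y : Γ) {b : ℕ} (hb : 1 ≤ b) (hy : orderOf y = q ^ b)
    (hallq : ∀ u : Γ, (∃ m : ℕ, orderOf u = q ^ m) → u ∈ Subgroup.zpowers y)
    (hponly : ∀ u : Γ, (∃ k : ℕ, orderOf u = p ^ k) → u ^ p = 1)
    (hprimes : ∀ s : ℕ, s.Prime → s ∣ Nat.card Γ → (s = p ∨ s = q))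
    (hnormal : ∀ c : Γ, c * y * c⁻¹ ∈ Subgroup.zpowers y) :
    (Subgroup.centralizer ({y} : Set Γ)).index = 1 ∨
    (Subgroup.centralizer ({y} : Set Γ)).index = p := by
  classical
  haveI : Fact q.Prime := ⟨hq⟩
  have hN1 : 1 < orderOf y := by
    rw [hy]
    calc 1 < q := hq.one_lt
    _ = q ^ 1 := (pow_one q).symm
    _ ≤ q ^ b := Nat.pow_le_pow_right hq.pos hb
  haveI : NeZero (orderOf y) := ⟨by omega⟩
  set D := Subgroup.centralizer ({y} : Set Γ) with hD
  -- choose exponents for conjugation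
  have hconj : ∀ c : Γ, ∃ k : ℕ, y ^ k = c * y * c⁻¹ := by
    intro c
    obtain ⟨k, hk⟩ := mem_powers_iff_mem_zpowers.mpr (hnormal c)
    exact ⟨k, hk⟩
  choose kf hkf using hconj
  have uniq : ∀ a2 b2 : ℕ, y ^ a2 = y ^ b2 ↔ ((a2 : ZMod (orderOf y)) = (b2 : ZMod (orderOf y))) := by
    intro a2 b2
    rw [pow_eq_pow_iff_modEq, ZMod.natCast_eq_natCast_iff]
  -- the homomorphism
  have hmul : ∀ c d : Γ, ((kf (c * d) : ZMod (orderOf y))) = ((kf c : ZMod (orderOf y))) * ((kf d : ZMod (orderOf y))) := by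
    intro c d
    have key : y ^ kf (c * d) = y ^ (kf c * kf d) := by
      calc y ^ kf (c * d) = (c * d) * y * (c * d)⁻¹ := hkf (c * d)
      _ = c * (d * y * d⁻¹) * c⁻¹ := by group
      _ = c * y ^ kf d * c⁻¹ := by rw [hkf d]
      _ = (c * y * c⁻¹) ^ kf d := by rw [conj_pow]
      _ = (y ^ kf c) ^ kf d := by rw [hkf c]
      _ = y ^ (kf c * kf d) := by rw [← pow_mul]
    have := (uniq _ _).mp key
    rwa [Nat.cast_mul] at this
  have hone : ((kf 1 : ZMod (orderOf y))) = 1 := by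
    have key : y ^ kf 1 = y ^ 1 := by
      rw [hkf 1, pow_one]; group
    have := (uniq _ _).mp key
    rwa [Nat.cast_one] at this
  let f0 : Γ →* ZMod (orderOf y) :=
    { toFun := fun c => (kf c : ZMod (orderOf y)), map_one' := hone, map_mul' := hmul }
  let F : Γ →* (ZMod (orderOf y))ˣ := f0.toHomUnits
  -- kernel is the centralizer
  have hker : ∀ c : Γ, F c = 1 ↔ c ∈ D := by
    intro c
    rw [Units.ext_iff]
    have h1 : ((F c : ZMod (orderOf y))) = ((kf c : ZMod (orderOf y))) := rfl
    have h2 : ((1 : (ZMod (orderOf y))ˣ) : ZMod (orderOf y)) = ((1 : ℕ) : ZMod (orderOf y)) := by rw [Nat.cast_one]; rfl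
    rw [h1, h2, ← uniq, hkf c, pow_one]
    constructor
    · intro hcc
      rw [hD, Subgroup.mem_centralizer_iff]
      intro m hm
      rw [Set.mem_singleton_iff] at hm
      subst hm
      have := mul_inv_eq_iff_eq_mul.mp hcc
      rw [this]
    · intro hcc
      have := Subgroup.mem_centralizer_iff.mp hcc y (Set.mem_singleton y)
      rw [← this]; group
  have hDker : D = F.ker := by
    ext c
    rw [MonoidHom.mem_ker]
    exact (hker c).symm
  -- index = card of range
  have hindex : D.index = Nat.card F.range := by
    rw [hDker]
    exact Nat.card_congr (QuotientGroup.quotientKerEquivRange F).toEquiv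
  -- every element of the range satisfies r ^ p = 1
  have hrange : ∀ r : (ZMod (orderOf y))ˣ, r ∈ F.range → r ^ p = 1 := by
    rintro r ⟨c, rfl⟩
    have hc0 : orderOf c ≠ 0 := (orderOf_pos c).ne'
    obtain ⟨α, β, hαβ⟩ := pg_two_primes p q (orderOf c) hc0
      (fun s hs hsd => hprimes s hs (hsd.trans (orderOf_dvd_natCard c)))
    -- decompose c = c2 * c1 with c1 a p-element, c2 a q-element
    have hco : Nat.Coprime (p ^ α) (q ^ β) :=
      Nat.Coprime.pow_right β (Nat.Coprime.pow_left α ((Nat.coprime_primes hp hq).mpr hpq))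
    have hbez : ((p : ℤ) ^ α) * Nat.gcdA (p ^ α) (q ^ β) +
        ((q : ℤ) ^ β) * Nat.gcdB (p ^ α) (q ^ β) = 1 := by
      have h3 := Nat.gcd_eq_gcd_ab (p ^ α) (q ^ β)
      rw [Nat.Coprime.gcd_eq_one hco] at h3
      push_cast at h3 ⊢
      omega
    set c1 : Γ := c ^ (((q : ℤ) ^ β) * Nat.gcdB (p ^ α) (q ^ β)) with hc1
    set c2 : Γ := c ^ (((p : ℤ) ^ α) * Nat.gcdA (p ^ α) (q ^ β)) with hc2
    have hsplit : c2 * c1 = c := by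
      rw [hc1, hc2, ← zpow_add, hbez, zpow_one]
    have hcord : (c : Γ) ^ (((p : ℤ) ^ α) * ((q : ℤ) ^ β)) = 1 := by
      have he : (((p : ℤ) ^ α) * ((q : ℤ) ^ β)) = ((orderOf c : ℕ) : ℤ) := by
        rw [hαβ]; push_cast; ring
      rw [he, zpow_natCast, pow_orderOf_eq_one]
    have hc1p : c1 ^ (p ^ α) = 1 := by
      rw [hc1, ← zpow_natCast, ← zpow_mul]
      have : ((q : ℤ) ^ β) * Nat.gcdB (p ^ α) (q ^ β) * ((p ^ α : ℕ) : ℤ) =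
          (((p : ℤ) ^ α) * ((q : ℤ) ^ β)) * Nat.gcdB (p ^ α) (q ^ β) := by
        push_cast; ring
      rw [this, zpow_mul, hcord, one_zpow]
    have hc2q : c2 ^ (q ^ β) = 1 := by
      rw [hc2, ← zpow_natCast, ← zpow_mul]
      have : ((p : ℤ) ^ α) * Nat.gcdA (p ^ α) (q ^ β) * ((q ^ β : ℕ) : ℤ) =
          (((p : ℤ) ^ α) * ((q : ℤ) ^ β)) * Nat.gcdA (p ^ α) (q ^ β) := by
        push_cast; ring
      rw [this, zpow_mul, hcord, one_zpow]
    -- c1 is a p-element, c2 a q-element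
    have hc1el : ∃ i, orderOf c1 = p ^ i := by
      have := orderOf_dvd_iff_pow_eq_one.mpr hc1p
      obtain ⟨i, _, hi⟩ := (Nat.dvd_prime_pow hp).mp this
      exact ⟨i, hi⟩
    have hc2el : ∃ j, orderOf c2 = q ^ j := by
      have := orderOf_dvd_iff_pow_eq_one.mpr hc2q
      obtain ⟨j, _, hj⟩ := (Nat.dvd_prime_pow hq).mp this
      exact ⟨j, hj⟩
    have hFc2 : F c2 = 1 := by
      rw [hker]
      have hmem : c2 ∈ Subgroup.zpowers y := hallq c2 hc2el
      rw [hD, Subgroup.mem_centralizer_iff]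
      intro m hm
      rw [Set.mem_singleton_iff] at hm
      rw [hm]
      obtain ⟨k, hk⟩ := Subgroup.mem_zpowers_iff.mp hmem
      rw [← hk]
      exact ((Commute.refl y).zpow_right k).eq
    have hFc1 : (F c1) ^ p = 1 := by
      rw [← map_pow, hponly c1 hc1el, map_one]
    calc (F c) ^ p = (F c2 * F c1) ^ p := by rw [← map_mul, hsplit]
    _ = (F c2) ^ p * (F c1) ^ p := mul_pow _ _ _
    _ = 1 := by rw [hFc1, hFc2, one_pow, one_mul]
  -- the reduction map to (ZMod q)ˣ
  have hdq : q ∣ orderOf y := by rw [hy]; exact dvd_pow_self q (by omega)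
  haveI : NeZero q := ⟨hq.pos.ne'⟩
  set φ : (ZMod (orderOf y))ˣ →* (ZMod q)ˣ := ZMod.unitsMap hdq with hφ
  have hsurj : Function.Surjective φ := ZMod.unitsMap_surjective hdq
  -- card of kernel of φ is q ^ (b - 1)
  have hcardker : Nat.card φ.ker = q ^ (b - 1) := by
    have h1 : Nat.card (ZMod (orderOf y))ˣ = Nat.card ((ZMod (orderOf y))ˣ ⧸ φ.ker) * Nat.card φ.ker :=
      Subgroup.card_eq_card_quotient_mul_card_subgroup φ.ker
    have h2 : Nat.card ((ZMod (orderOf y))ˣ ⧸ φ.ker) = Nat.card (ZMod q)ˣ := by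
      have e1 := Nat.card_congr (QuotientGroup.quotientKerEquivRange φ).toEquiv
      rw [MonoidHom.range_eq_top_of_surjective φ hsurj] at e1
      rw [e1]
      exact Nat.card_congr Subgroup.topEquiv.toEquiv
    have h3 : Nat.card (ZMod (orderOf y))ˣ = q ^ (b - 1) * (q - 1) := by
      rw [Nat.card_eq_fintype_card, ZMod.card_units_eq_totient, hy,
        Nat.totient_prime_pow hq (by omega)]
    have h4 : Nat.card (ZMod q)ˣ = q - 1 := by
      rw [Nat.card_eq_fintype_card, ZMod.card_units_eq_totient, Nat.totient_prime hq]
    rw [h3, h2, h4] at h1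
    have hq1 : 0 < q - 1 := by have := hq.one_lt; omega
    have h5 : (q - 1) * (q ^ (b - 1)) = (q - 1) * Nat.card φ.ker := by
      rw [mul_comm (q-1) (q ^ (b-1))]; exact h1
    exact (Nat.eq_of_mul_eq_mul_left hq1 h5).symm
  -- φ is injective on F.range
  have hinj : ∀ r : (ZMod (orderOf y))ˣ, r ∈ F.range → φ r = 1 → r = 1 := by
    intro r hr h1
    have h2 : orderOf r ∣ p := orderOf_dvd_iff_pow_eq_one.mpr (hrange r hr)
    have h3 : r ∈ φ.ker := h1
    have h4 : orderOf r ∣ q ^ (b - 1) := by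
      have e1 : orderOf (⟨r, h3⟩ : φ.ker) ∣ Nat.card φ.ker := orderOf_dvd_natCard _
      rw [hcardker] at e1
      rwa [Subgroup.orderOf_mk] at e1
    have h5 : orderOf r ∣ 1 := by
      have hcop : Nat.Coprime p (q ^ (b - 1)) :=
        Nat.Coprime.pow_right _ ((Nat.coprime_primes hp hq).mpr hpq)
      calc orderOf r ∣ Nat.gcd p (q ^ (b - 1)) := Nat.dvd_gcd h2 h4
      _ = 1 := hcop
    rw [Nat.dvd_one, orderOf_eq_one_iff] at h5
    exact h5
  -- the composite map from F.range
  set ψ : F.range →* (ZMod q)ˣ := φ.comp F.range.subtype with hψ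
  have hψinj : Function.Injective ψ := by
    rw [injective_iff_map_eq_one]
    intro a ha
    have : (a : (ZMod (orderOf y))ˣ) = 1 := hinj a a.2 ha
    exact Subtype.ext this
  have hcard1 : Nat.card F.range = Nat.card ψ.range :=
    Nat.card_congr (MonoidHom.ofInjective hψinj).toEquiv
  -- ψ.range is cyclic with exponent dividing p
  haveI : IsCyclic (ZMod q)ˣ := inferInstance
  have hexp : ∀ w : ψ.range, w ^ p = 1 := by
    intro w
    obtain ⟨v, hv⟩ := w.2
    apply Subtype.ext
    rw [SubmonoidClass.coe_pow, OneMemClass.coe_one, ← hv, ← map_pow]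
    have h8 : v ^ p = 1 := by
      apply Subtype.ext
      rw [SubmonoidClass.coe_pow, OneMemClass.coe_one]
      exact hrange _ v.2
    rw [h8, map_one]
  have hdvd : Nat.card ψ.range ∣ p := by
    have h9 : Monoid.exponent ψ.range ∣ p := Monoid.exponent_dvd_of_forall_pow_eq_one hexp
    rw [← IsCyclic.exponent_eq_card]
    exact h9
  rw [hindex, hcard1]
  exact (Nat.Prime.eq_one_or_self_of_dvd hp _ hdvd)

end T5

section T6
variable {G : Type*} [Group G] [Finite G]

lemma pg_coe_zpowers_iff {H : Subgroup G} (u v : H) :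
    u ∈ zpowers v ↔ (u : G) ∈ zpowers (v : G) := by
  constructor
  · intro hm
    obtain ⟨k, hk⟩ := mem_zpowers_iff.mp hm
    exact mem_zpowers_iff.mpr ⟨k, by rw [← hk]; exact (SubgroupClass.coe_zpow v k).symm⟩
  · intro hm
    obtain ⟨k, hk⟩ := mem_zpowers_iff.mp hm
    refine mem_zpowers_iff.mpr ⟨k, ?_⟩
    apply Subtype.coe_injective
    show ((v ^ k : H) : G) = (u : G)
    rw [show ((v ^ k : H) : G) = (v : G) ^ k from SubgroupClass.coe_zpow v k]
    exact hk

lemma pg_two_central {p : ℕ} (hp : p.Prime)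
    (hZel : ∀ z : G, z ∈ Subgroup.center G → z ≠ 1 → orderOf z = p)
    (hZbig : p < Nat.card (Subgroup.center G)) :
    ∃ z1 z2 : G, z1 ∈ Subgroup.center G ∧ z2 ∈ Subgroup.center G ∧
      orderOf z1 = p ∧ orderOf z2 = p ∧ z1 ∉ zpowers z2 ∧ z2 ∉ zpowers z1 := by
  have h1 : ∃ z1, z1 ∈ Subgroup.center G ∧ z1 ≠ 1 := by
    by_contra hcon
    push_neg at hcon
    have : Subgroup.center G = ⊥ := (Subgroup.eq_bot_iff_forall _).mpr hcon
    rw [this, Subgroup.card_bot] at hZbig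
    exact absurd hZbig (by have := hp.pos; omega)
  obtain ⟨z1, hz1Z, hz1⟩ := h1
  have ho1 : orderOf z1 = p := hZel z1 hz1Z hz1
  have h2 : ¬ Subgroup.center G ≤ zpowers z1 := by
    intro hle
    have := Subgroup.card_le_of_le hle
    rw [Nat.card_zpowers, ho1] at this
    omega
  obtain ⟨z2, hz2Z, hz2n⟩ := SetLike.not_le_iff_exists.mp h2
  have hz2 : z2 ≠ 1 := by
    intro e; exact hz2n (e ▸ one_mem _)
  have ho2 : orderOf z2 = p := hZel z2 hz2Z hz2
  refine ⟨z1, z2, hz1Z, hz2Z, ho1, ho2, ?_, hz2n⟩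
  intro hmem
  exact hz2n (pg_mem_zpowers_of_orderOf_dvd (mem_zpowers z2) hmem (by rw [ho1, ho2]))

end T6

theorem structure_of_center_elementary_abelian {G : Type*} [Group G] [Finite G]
    (h : pgC4Free G) (hG : ¬ IsPrimePow (Nat.card G))
    (p : ℕ) (hp : p.Prime) (hZp : IsPGroup p (Subgroup.center G))
    (hZel : ∀ z : G, z ∈ Subgroup.center G → z ≠ 1 → orderOf z = p)
    (hZbig : p < Nat.card (Subgroup.center G)) :
    ∀ q : ℕ, q.Prime → q ≠ p → ∀ x : G, x ≠ 1 → (∃ n : ℕ, orderOf x = q ^ n) →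
      (∀ s : ℕ, s.Prime →
          (s ∣ Nat.card (Subgroup.centralizer ({x} : Set G)) ↔ s = p ∨ s = q)) ∧
      (q < orderOf x →
        (∀ P : Sylow p (Subgroup.centralizer ({x} : Set G)),
            Monoid.exponent (P : Subgroup (Subgroup.centralizer ({x} : Set G))) = p) ∧
        (∀ S : Sylow q (Subgroup.centralizer ({x} : Set G)),
            IsCyclic (S : Subgroup (Subgroup.centralizer ({x} : Set G))) ∧
            (S : Subgroup (Subgroup.centralizer ({x} : Set G))).Normal ∧
            ∀ y : (Subgroup.centralizer ({x} : Set G)),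
              (S : Subgroup (Subgroup.centralizer ({x} : Set G))) = Subgroup.zpowers y →
                (Subgroup.centralizer ({y} :
                    Set (Subgroup.centralizer ({x} : Set G)))).index = 1 ∨
                (Subgroup.centralizer ({y} :
                    Set (Subgroup.centralizer ({x} : Set G)))).index = p)) := by
  intro q hq hqp x hx1 hxq
  haveI : Fact q.Prime := ⟨hq⟩
  haveI : Fact p.Prime := ⟨hp⟩
  have hpq : p ≠ q := fun e => hqp e.symm
  obtain ⟨n, hxn⟩ := hxq
  have hn1 : 1 ≤ n := by
    by_contra hh
    have hn0 : n = 0 := by omega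
    rw [hn0, pow_zero] at hxn
    exact hx1 (orderOf_eq_one_iff.mp hxn)
  obtain ⟨z1, z2, hz1Z, hz2Z, ho1, ho2, h12, h21⟩ := pg_two_central hp hZel hZbig
  have cc1 : ∀ w : G, Commute w z1 := fun w => Subgroup.mem_center_iff.mp hz1Z w
  have cc2 : ∀ w : G, Commute w z2 := fun w => Subgroup.mem_center_iff.mp hz2Z w
  have hmemC : ∀ w : G, w ∈ Subgroup.centralizer ({x} : Set G) ↔ Commute x w := by
    intro w
    rw [Subgroup.mem_centralizer_iff]
    constructor
    · intro hh; exact hh x (Set.mem_singleton x)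
    · intro hh m hm
      rw [Set.mem_singleton_iff] at hm
      rw [hm]; exact hh
  have hxC : x ∈ Subgroup.centralizer ({x} : Set G) := (hmemC x).mpr (Commute.refl x)
  have hz1C : z1 ∈ Subgroup.centralizer ({x} : Set G) := (hmemC z1).mpr (cc1 x)
  -- PART 1
  have hprimes : ∀ s : ℕ, s.Prime →
      (s ∣ Nat.card (Subgroup.centralizer ({x} : Set G)) ↔ s = p ∨ s = q) := by
    intro s hs
    constructor
    · intro hdvd
      by_contra hcon
      push_neg at hcon
      obtain ⟨hsp, hsq⟩ := hcon
      haveI : Fact s.Prime := ⟨hs⟩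
      obtain ⟨g', hg'⟩ :=
        exists_prime_orderOf_dvd_card' (G := (Subgroup.centralizer ({x} : Set G))) s hdvd
      have hgord : orderOf ((g' : G)) = s := by rw [Subgroup.orderOf_coe]; exact hg'
      have hcxg : Commute x (g' : G) := (hmemC _).mp g'.2
      exact pg_part1_c4 h hp hq hs hpq hsp hsq hn1 hxn hgord hcxg hz1Z hz2Z
        (cc1 (g' : G)) (cc2 (g' : G)) ho1 ho2 h12 h21
    · intro hcase
      rcases hcase with he | he
      · rw [he]
        have hle : zpowers z1 ≤ Subgroup.centralizer ({x} : Set G) := zpowers_le.mpr hz1C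
        have hdv := Subgroup.card_dvd_of_le hle
        rwa [Nat.card_zpowers, ho1] at hdv
      · rw [he]
        have hle : zpowers x ≤ Subgroup.centralizer ({x} : Set G) := zpowers_le.mpr hxC
        have hdv := Subgroup.card_dvd_of_le hle
        rw [Nat.card_zpowers, hxn] at hdv
        exact (dvd_pow_self q (by omega)).trans hdv
  refine ⟨hprimes, ?_⟩
  intro hqlt
  have hn2 : 2 ≤ n := by
    by_contra hh
    have hne : n = 1 := by omega
    rw [hxn, hne, pow_one] at hqlt
    omega
  -- every p-element commuting with x has order dividing p
  have subp : ∀ w : G, Commute x w → (∃ k, orderOf w = p ^ k) → w ^ p = 1 := by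
    intro w hcw hke
    obtain ⟨k, hk⟩ := hke
    by_contra hne
    have hk2 : 2 ≤ k := by
      by_contra hh
      have hdd : orderOf w ∣ p := by
        rw [hk]
        calc p ^ k ∣ p ^ 1 := pow_dvd_pow p (by omega)
        _ = p := pow_one p
      exact hne (orderOf_dvd_iff_pow_eq_one.mp hdd)
    have hw'ord : orderOf (w ^ p ^ (k - 2)) = p ^ 2 := by
      rw [orderOf_pow, hk, Nat.gcd_comm, Nat.gcd_eq_left (pow_dvd_pow p (by omega)),
        Nat.pow_div (by omega) hp.pos]
      have he : k - (k - 2) = 2 := by omega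
      rw [he]
    have hcxw' : Commute x (w ^ p ^ (k - 2)) := hcw.pow_right _
    by_cases hz1w : z1 ∈ zpowers ((w ^ p ^ (k - 2)) ^ p)
    · have hz2w : z2 ∉ zpowers ((w ^ p ^ (k - 2)) ^ p) := by
        intro hz2w
        exact h21 (pg_mem_zpowers_of_orderOf_dvd hz2w hz1w (by rw [ho1, ho2]))
      exact pg_parta_c4 h hp hq hpq hn1 hxn hw'ord hcxw' (fun u => cc2 u) ho2 hz2w
    · exact pg_parta_c4 h hp hq hpq hn1 hxn hw'ord hcxw' (fun u => cc1 u) ho1 hz1w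
  constructor
  · -- Sylow p exponent
    intro P
    have hpC : p ∣ Nat.card (Subgroup.centralizer ({x} : Set G)) :=
      (hprimes p hp).mpr (Or.inl rfl)
    haveI : (P : Subgroup (Subgroup.centralizer ({x} : Set G))).FiniteIndex :=
      ⟨Subgroup.index_ne_zero_of_finite⟩
    have hdvdP : p ∣ Nat.card (P : Subgroup (Subgroup.centralizer ({x} : Set G))) := by
      have hcard := Subgroup.card_mul_index (P : Subgroup (Subgroup.centralizer ({x} : Set G)))
      rcases (hp.dvd_mul).mp (hcard ▸ hpC) with h' | h'
      · exact h'
      · exact absurd h' P.not_dvd_index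
    obtain ⟨g0, hg0⟩ := exists_prime_orderOf_dvd_card'
      (G := (P : Subgroup (Subgroup.centralizer ({x} : Set G)))) p hdvdP
    have hexp_dvd : Monoid.exponent (P : Subgroup (Subgroup.centralizer ({x} : Set G))) ∣ p := by
      apply Monoid.exponent_dvd_of_forall_pow_eq_one
      intro g
      obtain ⟨kk, hkk⟩ := P.2 g
      have hdd : orderOf g ∣ p ^ kk := orderOf_dvd_iff_pow_eq_one.mpr hkk
      have hordeq : orderOf (((g : (Subgroup.centralizer ({x} : Set G)))) : G) = orderOf g := by
        rw [Subgroup.orderOf_coe, Subgroup.orderOf_coe]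
      have hcxg : Commute x (((g : (Subgroup.centralizer ({x} : Set G)))) : G) :=
        (hmemC _).mp (g : (Subgroup.centralizer ({x} : Set G))).2
      obtain ⟨j, _, hj⟩ := (Nat.dvd_prime_pow hp).mp hdd
      have hpow := subp _ hcxg ⟨j, by rw [hordeq]; exact hj⟩
      rw [← orderOf_dvd_iff_pow_eq_one] at hpow ⊢
      rwa [hordeq] at hpow
    have hexp_p : p ∣ Monoid.exponent (P : Subgroup (Subgroup.centralizer ({x} : Set G))) := by
      have h10 := Monoid.order_dvd_exponent g0
      rwa [hg0] at h10
    exact Nat.dvd_antisymm hexp_dvd hexp_p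
  · -- Sylow q structure
    intro S
    have comp : ∀ g g2 : G, Commute x g → Commute x g2 → (∃ aa, orderOf g = q ^ aa) →
        (∃ bb, orderOf g2 = q ^ bb) → g ∈ zpowers g2 ∨ g2 ∈ zpowers g := by
      intro g g2 hcg hcg2 hga hgb
      rcases pg_claim1 h hp hq hpq hn2 hxn (fun u => cc1 u) ho1 g hcg hga with hg | hg <;>
        rcases pg_claim1 h hp hq hpq hn2 hxn (fun u => cc1 u) ho1 g2 hcg2 hgb with hh | hh
      · exact pg_zpowers_comparable hq ⟨n, hxn⟩ hg hh
      · exact Or.inl (zpowers_le.mpr hh hg)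
      · exact Or.inr (zpowers_le.mpr hg hh)
      · obtain ⟨aa, haa⟩ := hga
        obtain ⟨bb, hbb⟩ := hgb
        exact pg_claim2 h hp hq hpq hx1 haa hbb (fun u => cc1 u) ho1 hg hh
    have hordcoe : ∀ u : (Subgroup.centralizer ({x} : Set G)), orderOf (u : G) = orderOf u :=
      fun u => Subgroup.orderOf_coe u
    have hqel : ∀ u : (Subgroup.centralizer ({x} : Set G)),
        u ∈ (S : Subgroup (Subgroup.centralizer ({x} : Set G))) →
        ∃ m, orderOf ((u : G)) = q ^ m := by
      intro u hu
      obtain ⟨kk, hkk⟩ := S.2 ⟨u, hu⟩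
      have hdd := orderOf_dvd_iff_pow_eq_one.mpr hkk
      rw [Subgroup.orderOf_mk] at hdd
      rw [← hordcoe u] at hdd
      obtain ⟨m, _, hm⟩ := (Nat.dvd_prime_pow hq).mp hdd
      exact ⟨m, hm⟩
    obtain ⟨g0, hg0K, hg0max⟩ : ∃ g0 ∈ (S : Subgroup (Subgroup.centralizer ({x} : Set G))),
        ∀ u ∈ (S : Subgroup (Subgroup.centralizer ({x} : Set G))), orderOf u ≤ orderOf g0 := by
      classical
      haveI : Fintype (Subgroup.centralizer ({x} : Set G)) := Fintype.ofFinite _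
      have hne : ((S : Subgroup (Subgroup.centralizer ({x} : Set G))) :
          Set (Subgroup.centralizer ({x} : Set G))).toFinset.Nonempty :=
        ⟨1, Set.mem_toFinset.mpr (one_mem _)⟩
      obtain ⟨g0, hg0, hmax⟩ := Finset.exists_max_image _ orderOf hne
      exact ⟨g0, Set.mem_toFinset.mp hg0, fun u hu => hmax u (Set.mem_toFinset.mpr hu)⟩
    have compC : ∀ u v : (Subgroup.centralizer ({x} : Set G)),
        (∃ m, orderOf (u : G) = q ^ m) → (∃ m, orderOf (v : G) = q ^ m) →
        u ∈ zpowers v ∨ v ∈ zpowers u := by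
      intro u v hu hv
      rcases comp (u : G) (v : G) ((hmemC _).mp u.2) ((hmemC _).mp v.2) hu hv with hh | hh
      · exact Or.inl ((pg_coe_zpowers_iff u v).mpr hh)
      · exact Or.inr ((pg_coe_zpowers_iff v u).mpr hh)
    have hKz : (S : Subgroup (Subgroup.centralizer ({x} : Set G))) = zpowers g0 := by
      apply le_antisymm
      · intro u hu
        rcases compC u g0 (hqel u hu) (hqel g0 hg0K) with hh | hh
        · exact hh
        · obtain ⟨mu, hmu⟩ := hqel u hu
          obtain ⟨mg, hmg⟩ := hqel g0 hg0K
          have hle : orderOf u ≤ orderOf g0 := hg0max u hu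
          rw [← hordcoe u, ← hordcoe g0, hmu, hmg] at hle
          have hmule : mu ≤ mg := (Nat.pow_le_pow_iff_right hq.one_lt).mp hle
          have hdv : orderOf u ∣ orderOf g0 := by
            rw [← hordcoe u, ← hordcoe g0, hmu, hmg]
            exact pow_dvd_pow q hmule
          exact pg_mem_zpowers_of_orderOf_dvd (mem_zpowers u) hh hdv
      · exact zpowers_le.mpr hg0K
    have hallq : ∀ u : (Subgroup.centralizer ({x} : Set G)),
        (∃ m, orderOf (u : G) = q ^ m) →
        u ∈ (S : Subgroup (Subgroup.centralizer ({x} : Set G))) := by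
      intro u hu
      rcases compC u g0 hu (hqel g0 hg0K) with hh | hh
      · rw [hKz]; exact hh
      · have hle : (S : Subgroup (Subgroup.centralizer ({x} : Set G))) ≤ zpowers u := by
          rw [hKz]; exact zpowers_le.mpr hh
        obtain ⟨m, hm⟩ := hu
        have hpg : IsPGroup q (zpowers u : Subgroup (Subgroup.centralizer ({x} : Set G))) :=
          IsPGroup.of_card (by rw [Nat.card_zpowers, ← hordcoe u, hm])
        have heq := S.3 hpg hle
        rw [← heq]
        exact mem_zpowers u
    have hnormal : (S : Subgroup (Subgroup.centralizer ({x} : Set G))).Normal := by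
      constructor
      intro nn hnn c
      apply hallq
      obtain ⟨m, hm⟩ := hqel nn hnn
      refine ⟨m, ?_⟩
      have he : ((c * nn * c⁻¹ : (Subgroup.centralizer ({x} : Set G))) : G) =
          (c : G) * (nn : G) * (c : G)⁻¹ := by push_cast; rfl
      rw [he]
      have horder := orderOf_injective (MulAut.conj (c : G)).toMonoidHom
        (MulEquiv.injective _) (nn : G)
      simp only [MulEquiv.coe_toMonoidHom, MulAut.conj_apply] at horder
      rw [horder, hm]
    refine ⟨?_, hnormal, ?_⟩
    · -- cyclic
      rw [hKz]
      exact ⟨⟨⟨g0, mem_zpowers g0⟩, fun b => by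
        obtain ⟨k, hk⟩ := mem_zpowers_iff.mp b.2
        refine mem_zpowers_iff.mpr ⟨k, Subtype.ext ?_⟩
        calc (((⟨g0, mem_zpowers g0⟩ : zpowers g0) ^ k : zpowers g0) : _)
            = g0 ^ k := SubgroupClass.coe_zpow _ k
          _ = ↑b := hk⟩⟩
    · -- index bound
      intro y hy
      have hyK : y ∈ (S : Subgroup (Subgroup.centralizer ({x} : Set G))) :=
        hy ▸ mem_zpowers y
      obtain ⟨bb, hbb⟩ := hqel y hyK
      have hyord : orderOf y = q ^ bb := by rw [← hordcoe y]; exact hbb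
      have hbb1 : 1 ≤ bb := by
        by_contra hh
        have hb0 : bb = 0 := by omega
        rw [hb0, pow_zero] at hyord
        have hy1 : Nat.card (S : Subgroup (Subgroup.centralizer ({x} : Set G))) = 1 := by
          rw [hy, Nat.card_zpowers, hyord]
        have hqC : q ∣ Nat.card (Subgroup.centralizer ({x} : Set G)) :=
          (hprimes q hq).mpr (Or.inr rfl)
        haveI : (S : Subgroup (Subgroup.centralizer ({x} : Set G))).FiniteIndex :=
          ⟨Subgroup.index_ne_zero_of_finite⟩
        have hcard := Subgroup.card_mul_index (S : Subgroup (Subgroup.centralizer ({x} : Set G)))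
        rcases hq.dvd_mul.mp (hcard ▸ hqC) with h' | h'
        · rw [hy1] at h'
          exact absurd (Nat.le_of_dvd one_pos h') (by have := hq.one_lt; omega)
        · exact S.not_dvd_index h'
      apply pg_index_bound hp hq hpq y hbb1 hyord
      · intro u hu
        rw [← hy]
        apply hallq u
        obtain ⟨m, hm⟩ := hu
        exact ⟨m, by rw [hordcoe u]; exact hm⟩
      · intro u hku
        obtain ⟨k, hk⟩ := hku
        have hcxu : Commute x (u : G) := (hmemC _).mp u.2
        have hpow := subp (u : G) hcxu ⟨k, by rw [hordcoe u]; exact hk⟩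
        rw [← orderOf_dvd_iff_pow_eq_one] at hpow ⊢
        rwa [hordcoe u] at hpow
      · intro s hs hsd
        exact (hprimes s hs).mp hsd
      · intro c
        have hconj := hnormal.conj_mem y hyK c
        rwa [hy] at hconj
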